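/- Let Σ be a positive semi-definite d×d matrix with ordered eigenvalues λ₁ ≥ ... ≥ λ_d and orthonormal eigenvectors v₁,...,v_d, let E ⊂ ℝ^d be a subspace of dimension r (with r ≤ d), and let P_{E^⊥} be the orthogonal projection onto E^⊥. Suppose X is a centred random vector with covariance Σ and that sup_{u ∈ E^⊥ ∩ S^{d-1}} E⟨X,u⟩² ≤ κ₄ λ_r for some κ₄ ≥ 1. Then the trace of the covariance of P_{E^⊥}X satisfies tr(Σ_{E^⊥}) ≤ r·κ₄·λ_r + Σ_{i>r} λ_i. -/

import Mathlib

open MeasureTheory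

theorem stmt_5 {Ω : Type*} [MeasurableSpace Ω] (μ : Measure Ω) [IsProbabilityMeasure μ]
    {d : ℕ} (X : Ω → EuclideanSpace ℝ (Fin d)) (hX : Measurable X)
    (v : Fin d → EuclideanSpace ℝ (Fin d)) (hv : Orthonormal ℝ v)
    (lam : Fin d → ℝ) (hanti : Antitone lam) (hnonneg : ∀ i, 0 ≤ lam i)
    (hmem : ∀ u : EuclideanSpace ℝ (Fin d), MemLp (fun ω => (inner ℝ (X ω) u : ℝ)) 2 μ)
    (hcent : ∀ u : EuclideanSpace ℝ (Fin d), (∫ ω, (inner ℝ (X ω) u : ℝ) ∂μ) = 0)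
    (hcov : ∀ i j : Fin d,
      (∫ ω, (inner ℝ (X ω) (v i) : ℝ) * (inner ℝ (X ω) (v j) : ℝ) ∂μ)
        = if i = j then lam i else 0)
    (E : Submodule ℝ (EuclideanSpace ℝ (Fin d))) (r : ℕ) (hr0 : 0 < r) (hrd : r ≤ d)
    (hdimE : Module.finrank ℝ E = r) (κ₄ : ℝ) (hκ₄ : 1 ≤ κ₄)
    (hop : ∀ u ∈ Eᗮ, ‖u‖ = 1 →
      (∫ ω, (inner ℝ (X ω) u : ℝ)^2 ∂μ) ≤ κ₄ * lam ⟨r - 1, by omega⟩) :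
    ∑ i : Fin d,
        (∫ ω, (inner ℝ ((Submodule.orthogonalProjection Eᗮ (X ω) : EuclideanSpace ℝ (Fin d))) (v i) : ℝ)^2 ∂μ)
      ≤ (r : ℝ) * κ₄ * lam ⟨r - 1, by omega⟩
        + ∑ i ∈ Finset.univ.filter (fun i : Fin d => r ≤ (i : ℕ)), lam i := by
  classical
  have hd0 : 0 < d := lt_of_lt_of_le hr0 hrd
  haveI : Nonempty (Fin d) := ⟨⟨0, hd0⟩⟩
  set lamr := lam ⟨r - 1, by omega⟩ with hlamr
  have hlamr0 : 0 ≤ lamr := hnonneg _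
  have hκ0 : 0 ≤ κ₄ := le_trans zero_le_one hκ₄
  -- orthonormal basis
  have hcard : Fintype.card (Fin d) = Module.finrank ℝ (EuclideanSpace ℝ (Fin d)) := by
    simp [finrank_euclideanSpace_fin]
  let b : OrthonormalBasis (Fin d) ℝ (EuclideanSpace ℝ (Fin d)) :=
    OrthonormalBasis.mk hv
      (le_of_eq (hv.linearIndependent.span_eq_top_of_card_eq_finrank hcard).symm)
  have hb : ∀ i, b i = v i := fun i => by simp [b]
  -- integrability of products
  have hint : ∀ w u : EuclideanSpace ℝ (Fin d),
      Integrable (fun ω => (inner ℝ (X ω) w : ℝ) * (inner ℝ (X ω) u : ℝ)) μ := by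
    intro w u
    have h := MemLp.smul (hmem u) (hmem w) (p := 2) (q := 2) (r := 1)
    rw [memLp_one_iff_integrable] at h
    exact h
  -- second moment formula
  have key : ∀ w : EuclideanSpace ℝ (Fin d),
      (∫ ω, (inner ℝ (X ω) w : ℝ)^2 ∂μ)
        = ∑ j, (inner ℝ (v j) w : ℝ)^2 * lam j := by
    intro w
    have hw : ∀ ω : Ω, (inner ℝ (X ω) w : ℝ)
        = ∑ j, (inner ℝ (v j) w : ℝ) * (inner ℝ (X ω) (v j) : ℝ) := by
      intro ω
      conv_lhs => rw [← b.sum_repr w]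
      rw [inner_sum]
      refine Finset.sum_congr rfl fun j _ => ?_
      rw [real_inner_smul_right, b.repr_apply_apply, hb]
    calc (∫ ω, (inner ℝ (X ω) w : ℝ)^2 ∂μ)
        = ∫ ω, ∑ j, ∑ k, ((inner ℝ (v j) w : ℝ) * (inner ℝ (v k) w : ℝ))
            * ((inner ℝ (X ω) (v j) : ℝ) * (inner ℝ (X ω) (v k) : ℝ)) ∂μ := by
          refine integral_congr_ae (Filter.Eventually.of_forall fun ω => ?_)
          dsimp only
          rw [pow_two, hw ω, Finset.sum_mul_sum]
          exact Finset.sum_congr rfl fun j _ => Finset.sum_congr rfl fun k _ => by ring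
      _ = ∑ j, ∑ k, ((inner ℝ (v j) w : ℝ) * (inner ℝ (v k) w : ℝ))
            * ∫ ω, (inner ℝ (X ω) (v j) : ℝ) * (inner ℝ (X ω) (v k) : ℝ) ∂μ := by
          rw [integral_finset_sum]
          · refine Finset.sum_congr rfl fun j _ => ?_
            rw [integral_finset_sum]
            · exact Finset.sum_congr rfl fun k _ => integral_const_mul _ _
            · exact fun k _ => (hint (v j) (v k)).const_mul _
          · exact fun j _ => integrable_finset_sum _
              fun k _ => (hint (v j) (v k)).const_mul _
      _ = ∑ j, (inner ℝ (v j) w : ℝ)^2 * lam j := by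
          refine Finset.sum_congr rfl fun j _ => ?_
          rw [Finset.sum_eq_single j]
          · rw [hcov j j, if_pos rfl]; ring
          · intro k _ hk
            rw [hcov j k, if_neg (Ne.symm hk), mul_zero]
          · intro h; exact absurd (Finset.mem_univ j) h
  -- notation for the projection of v j
  set P : EuclideanSpace ℝ (Fin d) →L[ℝ] Eᗮ := Submodule.orthogonalProjection Eᗮ with hP
  have hswap : ∀ (x : EuclideanSpace ℝ (Fin d)) (i : Fin d),
      (inner ℝ ((P x : Eᗮ) : EuclideanSpace ℝ (Fin d)) (v i) : ℝ)
        = (inner ℝ x ((P (v i) : Eᗮ) : EuclideanSpace ℝ (Fin d)) : ℝ) :=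
    fun x i => Submodule.inner_starProjection_left_eq_right Eᗮ x (v i)
  -- rewrite LHS
  have hLHS : ∑ i : Fin d,
        (∫ ω, (inner ℝ ((Submodule.orthogonalProjection Eᗮ (X ω) : EuclideanSpace ℝ (Fin d))) (v i) : ℝ)^2 ∂μ)
      = ∑ j, lam j * ‖((P (v j) : Eᗮ) : EuclideanSpace ℝ (Fin d))‖^2 := by
    have h1 : ∀ i : Fin d,
        (∫ ω, (inner ℝ ((Submodule.orthogonalProjection Eᗮ (X ω) : EuclideanSpace ℝ (Fin d))) (v i) : ℝ)^2 ∂μ)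
          = ∑ j, (inner ℝ (v j) ((P (v i) : Eᗮ) : EuclideanSpace ℝ (Fin d)) : ℝ)^2 * lam j := by
      intro i
      rw [← key ((P (v i) : Eᗮ) : EuclideanSpace ℝ (Fin d))]
      refine integral_congr_ae (Filter.Eventually.of_forall fun ω => ?_)
      dsimp only
      rw [hswap (X ω) i]
    rw [Finset.sum_congr rfl fun i _ => h1 i, Finset.sum_comm]
    refine Finset.sum_congr rfl fun j _ => ?_
    have h2 : ∀ i : Fin d, (inner ℝ (v j) ((P (v i) : Eᗮ) : EuclideanSpace ℝ (Fin d)) : ℝ)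
        = (inner ℝ ((P (v j) : Eᗮ) : EuclideanSpace ℝ (Fin d)) (v i) : ℝ) :=
      fun i => (hswap (v j) i).symm
    have h3 : ∑ i, (inner ℝ ((P (v j) : Eᗮ) : EuclideanSpace ℝ (Fin d)) (v i) : ℝ)^2
        = ‖((P (v j) : Eᗮ) : EuclideanSpace ℝ (Fin d))‖^2 := by
      have := b.sum_inner_mul_inner ((P (v j) : Eᗮ) : EuclideanSpace ℝ (Fin d))
        ((P (v j) : Eᗮ) : EuclideanSpace ℝ (Fin d))
      rw [real_inner_self_eq_norm_sq] at this
      rw [← this]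
      refine Finset.sum_congr rfl fun i _ => ?_
      rw [hb, sq, real_inner_comm (v i)]
    calc ∑ i, (inner ℝ (v j) ((P (v i) : Eᗮ) : EuclideanSpace ℝ (Fin d)) : ℝ)^2 * lam j
        = (∑ i, (inner ℝ ((P (v j) : Eᗮ) : EuclideanSpace ℝ (Fin d)) (v i) : ℝ)^2) * lam j := by
          rw [Finset.sum_mul]
          exact Finset.sum_congr rfl fun i _ => by rw [h2]
      _ = lam j * ‖((P (v j) : Eᗮ) : EuclideanSpace ℝ (Fin d))‖^2 := by rw [h3, mul_comm]
  rw [hLHS]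
  -- bounds for each term
  have hbound_lt : ∀ j : Fin d, (j : ℕ) < r →
      lam j * ‖((P (v j) : Eᗮ) : EuclideanSpace ℝ (Fin d))‖^2 ≤ κ₄ * lamr := by
    intro j hj
    set w : EuclideanSpace ℝ (Fin d) := ((P (v j) : Eᗮ) : EuclideanSpace ℝ (Fin d)) with hwdef
    by_cases hw0 : w = 0
    · rw [hw0]
      simp only [norm_zero]
      rw [zero_pow (by norm_num), mul_zero]
      exact mul_nonneg hκ0 hlamr0
    · have hwmem : w ∈ Eᗮ := (P (v j)).2
      have hn : 0 < ‖w‖ := norm_pos_iff.mpr hw0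
      set u : EuclideanSpace ℝ (Fin d) := ‖w‖⁻¹ • w with hudef
      have humem : u ∈ Eᗮ := Eᗮ.smul_mem _ hwmem
      have hunorm : ‖u‖ = 1 := by
        rw [hudef, norm_smul, norm_inv, norm_norm, inv_mul_cancel₀ hn.ne']
      have hu := hop u humem hunorm
      have hiu : (∫ ω, (inner ℝ (X ω) u : ℝ)^2 ∂μ)
          = (‖w‖⁻¹)^2 * ∫ ω, (inner ℝ (X ω) w : ℝ)^2 ∂μ := by
        rw [← integral_const_mul]
        refine integral_congr_ae (Filter.Eventually.of_forall fun ω => ?_)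
        dsimp only
        rw [hudef, real_inner_smul_right, mul_pow]
      have hIw : (∫ ω, (inner ℝ (X ω) w : ℝ)^2 ∂μ) ≤ ‖w‖^2 * (κ₄ * lamr) := by
        have h := hu
        rw [hiu] at h
        have h2 : (‖w‖⁻¹)^2 * (∫ ω, (inner ℝ (X ω) w : ℝ)^2 ∂μ) * ‖w‖^2
            ≤ κ₄ * lamr * ‖w‖^2 :=
          mul_le_mul_of_nonneg_right h (sq_nonneg _)
        calc (∫ ω, (inner ℝ (X ω) w : ℝ)^2 ∂μ)
            = (‖w‖⁻¹)^2 * (∫ ω, (inner ℝ (X ω) w : ℝ)^2 ∂μ) * ‖w‖^2 := by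
              field_simp
          _ ≤ κ₄ * lamr * ‖w‖^2 := h2
          _ = ‖w‖^2 * (κ₄ * lamr) := by ring
      -- lower bound for the integral
      have hinner : (inner ℝ (v j) w : ℝ) = ‖w‖^2 := by
        have hz : (inner ℝ (v j - w) w : ℝ) = 0 :=
          Submodule.starProjection_inner_eq_zero (K := Eᗮ) (v j) w hwmem
        have : (inner ℝ (v j) w : ℝ) - (inner ℝ w w : ℝ) = 0 := by
          rw [← inner_sub_left]; exact hz
        rw [sub_eq_zero] at this
        rw [this, real_inner_self_eq_norm_sq]
      have hlow : ‖w‖^4 * lam j ≤ ∫ ω, (inner ℝ (X ω) w : ℝ)^2 ∂μ := by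
        rw [key w]
        have := Finset.single_le_sum
          (f := fun k => (inner ℝ (v k) w : ℝ)^2 * lam k)
          (fun k _ => mul_nonneg (sq_nonneg _) (hnonneg k)) (Finset.mem_univ j)
        refine le_trans (le_of_eq ?_) this
        rw [hinner]
        ring
      have hchain : ‖w‖^4 * lam j ≤ ‖w‖^2 * (κ₄ * lamr) := le_trans hlow hIw
      have hdiv : ‖w‖^2 * lam j ≤ κ₄ * lamr := by
        have hsq : 0 < ‖w‖^2 := pow_pos hn 2
        have h4 : ‖w‖^4 * lam j = (‖w‖^2 * lam j) * ‖w‖^2 := by ring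
        have h5 : ‖w‖^2 * (κ₄ * lamr) = (κ₄ * lamr) * ‖w‖^2 := by ring
        rw [h4, h5] at hchain
        exact le_of_mul_le_mul_right hchain hsq
      calc lam j * ‖w‖^2 = ‖w‖^2 * lam j := by ring
        _ ≤ κ₄ * lamr := hdiv
  have hbound_ge : ∀ j : Fin d, r ≤ (j : ℕ) →
      lam j * ‖((P (v j) : Eᗮ) : EuclideanSpace ℝ (Fin d))‖^2 ≤ lam j := by
    intro j hj
    have hnorm : ‖((P (v j) : Eᗮ) : EuclideanSpace ℝ (Fin d))‖ ≤ 1 := by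
      have h1 : ‖(P (v j) : Eᗮ)‖ ≤ ‖P‖ * ‖v j‖ := P.le_opNorm (v j)
      have h2 : ‖P‖ ≤ 1 := Submodule.orthogonalProjection_norm_le Eᗮ
      have h3 : ‖v j‖ = 1 := hv.1 j
      calc ‖((P (v j) : Eᗮ) : EuclideanSpace ℝ (Fin d))‖ = ‖(P (v j) : Eᗮ)‖ := rfl
        _ ≤ ‖P‖ * ‖v j‖ := h1
        _ ≤ 1 * 1 := mul_le_mul h2 (le_of_eq h3) (norm_nonneg _) zero_le_one
        _ = 1 := by ring
    have hsq : ‖((P (v j) : Eᗮ) : EuclideanSpace ℝ (Fin d))‖^2 ≤ 1 := by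
      have := pow_le_pow_left₀ (norm_nonneg _) hnorm 2
      simpa using this
    calc lam j * ‖((P (v j) : Eᗮ) : EuclideanSpace ℝ (Fin d))‖^2
        ≤ lam j * 1 := mul_le_mul_of_nonneg_left hsq (hnonneg j)
      _ = lam j := mul_one _
  -- split the sum
  rw [← Finset.sum_filter_add_sum_filter_not Finset.univ (fun j : Fin d => r ≤ (j : ℕ))]
  have hcard_lt : (Finset.univ.filter (fun j : Fin d => ¬ r ≤ (j : ℕ))).card = r := by
    have heq : (Finset.univ.filter (fun j : Fin d => ¬ r ≤ (j : ℕ)))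
        = Finset.map (Fin.castLEEmb hrd) Finset.univ := by
      ext j
      rw [Finset.mem_filter, Finset.mem_map]
      constructor
      · intro hj
        have hjr : (j : ℕ) < r := Nat.lt_of_not_le hj.2
        exact ⟨⟨(j : ℕ), hjr⟩, Finset.mem_univ _, Fin.ext (by simp)⟩
      · rintro ⟨a, -, rfl⟩
        refine ⟨Finset.mem_univ _, ?_⟩
        simpa using a.2
    rw [heq, Finset.card_map, Finset.card_univ, Fintype.card_fin]
  have h1 : ∑ j ∈ Finset.univ.filter (fun j : Fin d => ¬ r ≤ (j : ℕ)),
      lam j * ‖((P (v j) : Eᗮ) : EuclideanSpace ℝ (Fin d))‖^2 ≤ (r : ℝ) * (κ₄ * lamr) := by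
    calc ∑ j ∈ Finset.univ.filter (fun j : Fin d => ¬ r ≤ (j : ℕ)),
          lam j * ‖((P (v j) : Eᗮ) : EuclideanSpace ℝ (Fin d))‖^2
        ≤ ∑ _j ∈ Finset.univ.filter (fun j : Fin d => ¬ r ≤ (j : ℕ)), κ₄ * lamr := by
          refine Finset.sum_le_sum fun j hj => ?_
          rw [Finset.mem_filter] at hj
          exact hbound_lt j (Nat.lt_of_not_le hj.2)
      _ = (r : ℝ) * (κ₄ * lamr) := by
          rw [Finset.sum_const, hcard_lt, nsmul_eq_mul]
  have h2 : ∑ j ∈ Finset.univ.filter (fun j : Fin d => r ≤ (j : ℕ)),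
      lam j * ‖((P (v j) : Eᗮ) : EuclideanSpace ℝ (Fin d))‖^2
      ≤ ∑ j ∈ Finset.univ.filter (fun j : Fin d => r ≤ (j : ℕ)), lam j := by
    refine Finset.sum_le_sum fun j hj => ?_
    rw [Finset.mem_filter] at hj
    exact hbound_ge j hj.2
  have := add_le_add h2 h1
  calc ∑ j ∈ Finset.univ.filter (fun j : Fin d => r ≤ (j : ℕ)),
          lam j * ‖((P (v j) : Eᗮ) : EuclideanSpace ℝ (Fin d))‖^2
        + ∑ j ∈ Finset.univ.filter (fun j : Fin d => ¬ r ≤ (j : ℕ)),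
          lam j * ‖((P (v j) : Eᗮ) : EuclideanSpace ℝ (Fin d))‖^2
      ≤ (∑ j ∈ Finset.univ.filter (fun j : Fin d => r ≤ (j : ℕ)), lam j)
        + (r : ℝ) * (κ₄ * lamr) := this
    _ = (r : ℝ) * κ₄ * lamr
        + ∑ i ∈ Finset.univ.filter (fun i : Fin d => r ≤ (i : ℕ)), lam i := by ring
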